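/- Let 𝔓 be a Lie algebra of polynomial vector fields on ℝ^n (n ≥ 1) containing all constant fields and the Euler field E, such that 𝔓_0 = ⟨E⟩_ℝ. Then the centroid C(𝔓) equals ℝ·Id, the scalar multiples of the identity map. -/

import Mathlib

open MvPolynomial

/-- Polynomial vector fields on ℝⁿ, given by their polynomial components. -/
abbrev PVF (n : ℕ) : Type := Fin n → MvPolynomial (Fin n) ℝ

/-- The Lie bracket of polynomial vector fields:
`[X,Y]^j = Σ_i (X^i ∂(Y^j)/∂x^i − Y^i ∂(X^j)/∂x^i)`. -/
noncomputable def vbracket {n : ℕ} (X Y : PVF n) : PVF n :=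
  fun j => ∑ i : Fin n, (X i * pderiv i (Y j) - Y i * pderiv i (X j))

/-- The Euler vector field `E = Σ_i x^i ∂/∂x^i`. -/
noncomputable def eulerVF (n : ℕ) : PVF n := fun j => MvPolynomial.X j

/-- The constant vector field `∂/∂x^i`. -/
noncomputable def constVF {n : ℕ} (i : Fin n) : PVF n := fun j => if j = i then 1 else 0

/-- A polynomial vector field is homogeneous of degree `i` (an element of `𝔥_i`)
if all its components are homogeneous polynomials of degree `i+1` (the zero field
is homogeneous of every degree). -/
def IsHomog {n : ℕ} (i : ℤ) (X : PVF n) : Prop :=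
  (∃ d : ℕ, (d : ℤ) = i + 1 ∧ ∀ k, (X k).IsHomogeneous d) ∨ X = 0

namespace CentroidAux

variable {n : ℕ}

lemma vbracket_self (Z : PVF n) : vbracket Z Z = 0 := by
  funext j; simp [vbracket]

lemma vbracket_smul_left (c : ℝ) (A B : PVF n) :
    vbracket (c • A) B = c • vbracket A B := by
  funext j
  simp only [vbracket, Pi.smul_apply]
  rw [Finset.smul_sum]
  refine Finset.sum_congr rfl fun i _ => ?_
  rw [Derivation.map_smul, smul_sub, smul_mul_assoc, mul_smul_comm]

lemma vbracket_smul_right (c : ℝ) (A B : PVF n) :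
    vbracket A (c • B) = c • vbracket A B := by
  funext j
  simp only [vbracket, Pi.smul_apply]
  rw [Finset.smul_sum]
  refine Finset.sum_congr rfl fun i _ => ?_
  rw [Derivation.map_smul, smul_sub, smul_mul_assoc, mul_smul_comm]

lemma vbracket_const_right (Z : PVF n) (k : Fin n) :
    vbracket Z (constVF k) = fun j => -(pderiv k (Z j)) := by
  funext j
  classical
  simp only [vbracket, constVF]
  rw [Finset.sum_congr rfl (fun i _ => by
    rw [show (pderiv i ((if j = k then 1 else 0) : MvPolynomial (Fin n) ℝ)) = 0 by
      split <;> simp])]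
  simp [ite_mul, Finset.sum_ite_eq]

lemma vbracket_euler_right (Z : PVF n) :
    vbracket Z (eulerVF n) =
      fun j => Z j - ∑ i : Fin n, MvPolynomial.X i * pderiv i (Z j) := by
  funext j
  classical
  have h1 : ∀ i : Fin n,
      Z i * pderiv i (eulerVF n j) = if i = j then Z i else 0 := by
    intro i
    rcases eq_or_ne i j with h | h
    · subst h; simp [eulerVF]
    · simp [eulerVF, pderiv_X_of_ne (Ne.symm h), h]
  simp only [vbracket]
  rw [Finset.sum_sub_distrib]
  congr 1
  · rw [Finset.sum_congr rfl (fun i _ => h1 i), Finset.sum_ite_eq' Finset.univ j Z]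
    simp

lemma vbracket_euler_const (k : Fin n) :
    vbracket (eulerVF n) (constVF k) = (-1 : ℝ) • constVF k := by
  rw [vbracket_const_right]
  funext j
  classical
  simp only [eulerVF, constVF, Pi.smul_apply]
  rcases eq_or_ne j k with h | h
  · subst h; simp
  · simp [pderiv_X_of_ne h, h]

lemma coeff_sum_X_pderiv (p : MvPolynomial (Fin n) ℝ) (m : Fin n →₀ ℕ) :
    coeff m (∑ i : Fin n, MvPolynomial.X i * pderiv i p)
      = (∑ i : Fin n, (m i : ℝ)) * coeff m p := by
  classical
  induction p using MvPolynomial.induction_on' with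
  | add p q hp hq =>
    simp only [map_add, mul_add, Finset.sum_add_distrib, coeff_add, hp, hq]
  | monomial m' a =>
    have key : ∀ i : Fin n,
        coeff m (MvPolynomial.X i * pderiv i (monomial m' a))
          = if m' = m then a * (m' i : ℝ) else 0 := by
      intro i
      rw [pderiv_monomial, X, monomial_mul, coeff_monomial]
      rcases Nat.eq_zero_or_pos (m' i) with h0 | hpos
      · simp [h0]
      · have hle : Finsupp.single i 1 ≤ m' := by
          rw [Finsupp.single_le_iff]; omega
        rw [add_tsub_cancel_of_le hle]
        split <;> ring
    rw [coeff_sum, Finset.sum_congr rfl (fun i _ => key i), coeff_monomial]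
    rcases eq_or_ne m' m with h | h
    · subst h
      simp [Finset.mul_sum, mul_comm]
    · simp [h]

lemma homog_one_of_euler_fixed (p : MvPolynomial (Fin n) ℝ)
    (h : ∑ i : Fin n, MvPolynomial.X i * pderiv i p = p) :
    p.IsHomogeneous 1 := by
  intro m hm
  have key := coeff_sum_X_pderiv p m
  rw [h] at key
  have hsum : (∑ i : Fin n, (m i : ℝ)) = 1 := by
    by_contra hne
    have hz : ((∑ i : Fin n, (m i : ℝ)) - 1) * coeff m p = 0 := by
      linear_combination -key
    rcases mul_eq_zero.mp hz with h1 | h2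
    · exact hne (by linarith [sub_eq_zero.mp h1])
    · exact hm h2
  have hsumn : (∑ i : Fin n, m i) = 1 := by
    exact_mod_cast (by push_cast at hsum ⊢; exact hsum : ((∑ i : Fin n, m i : ℕ) : ℝ) = 1)
  rw [Finsupp.weight_apply, Finsupp.sum_fintype]
  · simpa using hsumn
  · intro i; simp

end CentroidAux

open CentroidAux in
theorem centroid_eq_scalars_of_P0_eq_span_euler (n : ℕ) (hn : 1 ≤ n)
    (P : Submodule ℝ (PVF n))
    (hE : eulerVF n ∈ P)
    (hconst : ∀ i : Fin n, constVF i ∈ P)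
    (hbr : ∀ X ∈ P, ∀ Y ∈ P, vbracket X Y ∈ P)
    (hP0 : ∀ Y ∈ P, IsHomog 0 Y → ∃ c : ℝ, Y = c • eulerVF n)
    (f : PVF n →ₗ[ℝ] PVF n) (hfP : ∀ X ∈ P, f X ∈ P)
    (hcent : ∀ X ∈ P, ∀ Y ∈ P,
      f (vbracket X Y) = vbracket (f X) Y ∧ f (vbracket X Y) = vbracket X (f Y)) :
    ∃ c : ℝ, ∀ X ∈ P, f X = c • X := by
  classical
  -- Step 1 : f E is E-invariant, hence homogeneous of degree 0, hence c • E.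
  have hEE := hcent (eulerVF n) hE (eulerVF n) hE
  have hbrEE' : vbracket (f (eulerVF n)) (eulerVF n) = 0 := by
    rw [← hEE.1, vbracket_self, map_zero]
  have hfEfix : ∀ j, ∑ i : Fin n, MvPolynomial.X i * pderiv i (f (eulerVF n) j)
      = f (eulerVF n) j := by
    intro j
    have h0 := congrFun hbrEE' j
    rw [vbracket_euler_right] at h0
    have h0' : f (eulerVF n) j - ∑ i : Fin n, MvPolynomial.X i * pderiv i (f (eulerVF n) j)
        = 0 := h0
    linear_combination -h0'
  have hhomog : IsHomog 0 (f (eulerVF n)) := by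
    left
    exact ⟨1, by norm_num, fun k => homog_one_of_euler_fixed _ (hfEfix k)⟩
  obtain ⟨c, hc⟩ := hP0 (f (eulerVF n)) (hfP _ hE) hhomog
  refine ⟨c, ?_⟩
  -- Step 2 : f (∂_k) = c • ∂_k.
  have hfconst : ∀ k : Fin n, f (constVF k) = c • constVF k := by
    intro k
    have h1 := (hcent (eulerVF n) hE (constVF k) (hconst k)).1
    rw [vbracket_euler_const, map_smul, hc, vbracket_smul_left, vbracket_euler_const,
      smul_comm] at h1
    rw [neg_one_smul, neg_one_smul] at h1
    exact neg_injective h1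
  -- Step 3 : for any X ∈ P, f X = c • X.
  intro Z hZ
  have hbrc : ∀ k : Fin n, vbracket (f Z) (constVF k) = c • vbracket Z (constVF k) := by
    intro k
    have ha := (hcent Z hZ (constVF k) (hconst k)).1
    have hb := (hcent Z hZ (constVF k) (hconst k)).2
    rw [hfconst, vbracket_smul_right] at hb
    exact ha.symm.trans hb
  have hbre : vbracket (f Z) (eulerVF n) = c • vbracket Z (eulerVF n) := by
    have ha := (hcent Z hZ (eulerVF n) hE).1
    have hb := (hcent Z hZ (eulerVF n) hE).2
    rw [hc, vbracket_smul_right] at hb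
    exact ha.symm.trans hb
  funext j
  set r : MvPolynomial (Fin n) ℝ := f Z j - c • Z j with hr
  have hdr : ∀ k : Fin n, pderiv k r = 0 := by
    intro k
    have h0 := congrFun (hbrc k) j
    rw [vbracket_const_right, vbracket_const_right] at h0
    simp only [Pi.smul_apply] at h0
    rw [smul_neg] at h0
    have h0' := neg_injective h0
    rw [hr, map_sub, Derivation.map_smul, h0', sub_self]
  have hre : r = ∑ i : Fin n, MvPolynomial.X i * pderiv i r := by
    have h0 := congrFun hbre j
    rw [vbracket_euler_right, vbracket_euler_right] at h0
    simp only [Pi.smul_apply] at h0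
    have hlin : ∀ i : Fin n,
        MvPolynomial.X i * pderiv i r
          = MvPolynomial.X i * pderiv i (f Z j)
            - c • (MvPolynomial.X i * pderiv i (Z j)) := by
      intro i
      rw [hr, map_sub, Derivation.map_smul, mul_sub, mul_smul_comm]
    calc r = (f Z j - ∑ i : Fin n, MvPolynomial.X i * pderiv i (f Z j))
            - c • (Z j - ∑ i : Fin n, MvPolynomial.X i * pderiv i (Z j))
            + ((∑ i : Fin n, MvPolynomial.X i * pderiv i (f Z j))
              - c • ∑ i : Fin n, MvPolynomial.X i * pderiv i (Z j)) := by
          rw [hr, smul_sub]; abel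
      _ = ∑ i : Fin n, MvPolynomial.X i * pderiv i r := by
          rw [h0, sub_self, zero_add,
            Finset.sum_congr rfl (fun i _ => hlin i), Finset.sum_sub_distrib,
            ← Finset.smul_sum]
  have hr0 : r = 0 := by
    rw [hre, Finset.sum_congr rfl (fun i _ => by rw [hdr i, mul_zero]),
      Finset.sum_const_zero]
  have := sub_eq_zero.mp (hr.symm.trans hr0 : f Z j - c • Z j = 0)
  simpa using this
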